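/- Let a₁, …, a_m ∈ ℝ³ be constant vectors, let k₁, …, k_m ∈ ℝ, let ω : ℝ → ℝ³, and let b₁, …, b_m : ℝ → ℝ³ be differentiable functions satisfying b_j′(t) = b_j(t) × ω(t) for all t and all j. Define Φ(t) = Σ_{j=1}^m k_j (1 + a_j · b_j(t)) and e(t) = Σ_{j=1}^m k_j (a_j × b_j(t)). Then Φ is differentiable and Φ′(t) = ω(t) · e(t) for all t. -/

import Mathlib

open Matrix

/-- The cross product on `ℝ³` with the Euclidean structure. -/
noncomputable def cross3 (x y : EuclideanSpace ℝ (Fin 3)) : EuclideanSpace ℝ (Fin 3) :=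
  (WithLp.equiv 2 (Fin 3 → ℝ)).symm
    (crossProduct ((WithLp.equiv 2 (Fin 3 → ℝ)) x) ((WithLp.equiv 2 (Fin 3 → ℝ)) y))

lemma inner_cross3_cycle (x y z : EuclideanSpace ℝ (Fin 3)) :
    (inner ℝ x (cross3 y z) : ℝ) = inner ℝ z (cross3 x y) := by
  simp only [cross3, PiLp.inner_apply, RCLike.inner_apply, conj_trivial,
    WithLp.equiv_symm_apply, WithLp.equiv_apply, PiLp.toLp_apply, Fin.sum_univ_three]
  simp [crossProduct]
  ring

/-- If `b_j′ = b_j × ω`, then `Φ(t) = ∑ j, k j (1 + a j · b j t)` is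
differentiable with `Φ′(t) = ω(t) · e(t)` where `e(t) = ∑ j, k j (a j × b j t)`. -/
theorem deriv_error_function_along_kinematics
    (m : ℕ) (a : Fin m → EuclideanSpace ℝ (Fin 3)) (k : Fin m → ℝ)
    (ω : ℝ → EuclideanSpace ℝ (Fin 3))
    (b : Fin m → ℝ → EuclideanSpace ℝ (Fin 3))
    (hb : ∀ j t, HasDerivAt (b j) (cross3 (b j t) (ω t)) t) :
    ∀ t : ℝ, HasDerivAt (fun s => ∑ j, k j * (1 + inner ℝ (a j) (b j s) : ℝ))
      (inner ℝ (ω t) (∑ j, k j • cross3 (a j) (b j t)) : ℝ) t := by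
  intro t
  have key : (inner ℝ (ω t) (∑ j, k j • cross3 (a j) (b j t)) : ℝ)
      = ∑ j, k j * inner ℝ (a j) (cross3 (b j t) (ω t)) := by
    rw [inner_sum]
    refine Finset.sum_congr rfl fun j _ => ?_
    rw [real_inner_smul_right, inner_cross3_cycle, inner_cross3_cycle]
  rw [key]
  apply HasDerivAt.fun_sum
  intro j _
  have h1 : HasDerivAt (fun s => (inner ℝ (a j) (b j s) : ℝ))
      (inner ℝ (a j) (cross3 (b j t) (ω t))) t := by
    have := (hasDerivAt_const t (a j)).inner ℝ (hb j t)
    simpa using this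
  simpa [mul_add] using ((h1.const_add 1).const_mul (k j))
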